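/- Suppose there exists a (u+1)-GDD of type q^(u+1), and for each d in a set D of non-negative integers there exists a 4-GDD of type h^u d^1. Then for any choice d_1, …, d_q ∈ D, there exists a 4-GDD of type (h·q)^u (d_1 + d_2 + ⋯ + d_q)^1. -/

import Mathlib

/-- A `K`-group divisible design on point set `V`: `Gs` is the multiset of groups
(forming a partition of `V`), `Bs` the set of blocks, `K` the set of allowed block
sizes.  Every pair of points from distinct groups lies in exactly one block and no
pair of points from the same group lies in any block. -/
structure IsGDD (V : Type) (Gs : Multiset (Finset V)) (Bs : Finset (Finset V))
    (K : Set ℕ) : Prop where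
  partition : ∀ v : V, ∃ G s, Gs = G ::ₘ s ∧ v ∈ G ∧ ∀ G' ∈ s, v ∉ G'
  sizes : ∀ b ∈ Bs, b.card ∈ K
  cross : ∀ x y : V, x ≠ y → (∀ G ∈ Gs, ¬(x ∈ G ∧ y ∈ G)) →
      ∃! b, b ∈ Bs ∧ x ∈ b ∧ y ∈ b
  within : ∀ G ∈ Gs, ∀ x ∈ G, ∀ y ∈ G, x ≠ y → ∀ b ∈ Bs, ¬(x ∈ b ∧ y ∈ b)

namespace GDDaux

lemma uniqueGroup {V : Type} {K : Set ℕ} {Gs : Multiset (Finset V)} {Bs : Finset (Finset V)}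
    (H : IsGDD V Gs Bs K) (v : V) :
    ∃ G, G ∈ Gs ∧ v ∈ G ∧ ∀ G' ∈ Gs, v ∈ G' → G' = G := by
  obtain ⟨G, s, hGs, hv, hno⟩ := H.partition v
  refine ⟨G, by simp [hGs], hv, ?_⟩
  intro G' hG' hvG'
  rw [hGs, Multiset.mem_cons] at hG'
  rcases hG' with rfl | hG'
  · rfl
  · exact absurd hvG' (hno _ hG')

lemma countOne {V : Type} {K : Set ℕ} [DecidableEq (Finset V)]
    {Gs : Multiset (Finset V)} {Bs : Finset (Finset V)}
    (H : IsGDD V Gs Bs K) {v : V} {G : Finset V}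
    (hG : G ∈ Gs) (hv : v ∈ G) : Gs.count G = 1 := by
  obtain ⟨G0, s, hGs, hv0, hno⟩ := H.partition v
  have hGG0 : G = G0 := by
    rw [hGs, Multiset.mem_cons] at hG
    rcases hG with rfl | hG
    · rfl
    · exact absurd hv (hno _ hG)
  subst hGG0
  have hns : G ∉ s := fun hs => (hno _ hs) hv
  rw [hGs, Multiset.count_cons_self, Multiset.count_eq_zero.2 hns]

lemma rel_pairs {α β : Type*} {r : α → β → Prop} {s : Multiset α} {t : Multiset β}
    (h : Multiset.Rel r s t) :
    ∃ l : List (α × β), ((l.map Prod.fst : List α) : Multiset α) = s ∧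
      ((l.map Prod.snd : List β) : Multiset β) = t ∧ ∀ p ∈ l, r p.1 p.2 := by
  induction h with
  | zero => exact ⟨[], rfl, rfl, by simp⟩
  | @cons a b s' t' hab _ ih =>
    obtain ⟨l, h1, h2, h3⟩ := ih
    refine ⟨(a, b) :: l, ?_, ?_, ?_⟩
    · simp [← Multiset.cons_coe, h1]
    · simp [← Multiset.cons_coe, h2]
    · intro p hp
      rcases List.mem_cons.1 hp with rfl | hp
      · exact hab
      · exact h3 p hp

lemma two_mem_le {α : Type*} {l : Multiset α} {p p' : α} (hp : p ∈ l) (hp' : p' ∈ l)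
    (hne : p ≠ p') : ({p, p'} : Multiset α) ≤ l := by
  classical
  rw [Multiset.le_iff_count]
  intro a
  simp only [Multiset.insert_eq_cons, Multiset.count_cons, Multiset.count_singleton]
  split_ifs with h1 h2 h3
  · exact absurd (h2.symm.trans h1) hne
  · subst h1
    simpa using Multiset.one_le_count_iff_mem.2 hp'
  · subst h3
    simpa using Multiset.one_le_count_iff_mem.2 hp
  · simp

lemma eq_of_count_le_one {α γ : Type*} [DecidableEq γ] {l : Multiset α} (g : α → γ) {p p' : α}
    (hp : p ∈ l) (hp' : p' ∈ l) (hg : g p = g p')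
    (hc : Multiset.count (g p) (Multiset.map g l) ≤ 1) : p = p' := by
  classical
  by_contra hne
  have hle := Multiset.map_le_map (f := g) (two_mem_le hp hp' hne)
  have h2 : Multiset.count (g p) (Multiset.map g ({p, p'} : Multiset α)) = 2 := by
    simp [Multiset.count_cons, Multiset.count_singleton, hg]
  have := Multiset.count_le_of_le (g p) hle
  omega

lemma eqv_val {α : Type*} {G G' : Finset α} (hGG' : G = G') {v : α} (h : v ∈ G) (h' : v ∈ G') :
    ((G.equivFin ⟨v, h⟩ : Fin G.card) : ℕ) = ((G'.equivFin ⟨v, h'⟩ : Fin G'.card) : ℕ) := by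
  subst hGG'; rfl

lemma symm_val {α : Type*} {G G' : Finset α} (hGG' : G = G') {i : Fin G.card} {i' : Fin G'.card}
    (hii' : (i : ℕ) = (i' : ℕ)) : (↑(G.equivFin.symm i) : α) = ↑(G'.equivFin.symm i') := by
  subst hGG'
  rw [Fin.ext hii']

lemma sigExt {W : Type} {w : W → ℕ} {v1 v2 : Σ z : W, Fin (w z)}
    (h1 : v1.1 = v2.1) (h2 : ((v1.2 : Fin (w v1.1)) : ℕ) = ((v2.2 : Fin (w v2.1)) : ℕ)) :
    v1 = v2 := by
  obtain ⟨x, i⟩ := v1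
  obtain ⟨y, j⟩ := v2
  dsimp at h1 h2
  subst h1
  exact congrArg _ (Fin.ext h2)

end GDDaux

/-- Existence of a `K`-GDD whose multiset of group sizes is `gtype`. -/
def GDDExists (K : Set ℕ) (gtype : Multiset ℕ) : Prop :=
  ∃ (V : Type) (_ : Fintype V) (Gs : Multiset (Finset V)) (Bs : Finset (Finset V)),
    IsGDD V Gs Bs K ∧ Gs.map Finset.card = gtype

/-- Fundamental weighting construction: given a (u+1)-GDD of type q^(u+1) and
4-GDDs of type h^u d^1 for every d ∈ D, for any d_1, …, d_q ∈ D there is a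
4-GDD of type (h·q)^u (d_1 + ⋯ + d_q)^1. -/
theorem stmt_8 (h u q : ℕ) (D : Set ℕ)
    (hmaster : GDDExists {u + 1} (Multiset.replicate (u + 1) q))
    (hD : ∀ d ∈ D, GDDExists {4} (Multiset.replicate u h + {d}))
    (ds : Fin q → ℕ) (hds : ∀ i, ds i ∈ D) :
    GDDExists {4} (Multiset.replicate u (h * q) + {∑ i, ds i}) := by
  classical
  rcases Nat.eq_zero_or_pos q with rfl | hq
  · refine ⟨Empty, inferInstance, Multiset.replicate u ∅ + {∅}, ∅, ?_, ?_⟩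
    · constructor
      · intro v; exact v.elim
      · intro b hb; exact absurd hb (Finset.notMem_empty b)
      · intro x; exact x.elim
      · intro G hG x hx; exact x.elim
    · simp [Multiset.map_replicate]
  obtain ⟨W, ftW, GsM, BsM, master, hGsM⟩ := hmaster
  have hGsMcard : Multiset.card GsM = u + 1 := by
    have := congrArg Multiset.card hGsM
    simpa using this
  have hcardq : ∀ G ∈ GsM, G.card = q := fun G hG =>
    Multiset.eq_of_mem_replicate (by rw [← hGsM]; exact Multiset.mem_map_of_mem _ hG)
  choose grp hgrpmem hgrpself hgrpuniq using fun v => GDDaux.uniqueGroup master v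
  have hnd : GsM.Nodup := by
    rw [Multiset.nodup_iff_count_le_one]
    intro G
    by_cases hG : G ∈ GsM
    · obtain ⟨v, hv⟩ := Finset.card_pos.mp (by rw [hcardq G hG]; exact hq)
      exact le_of_eq (GDDaux.countOne master hG hv)
    · simp [Multiset.count_eq_zero.2 hG]
  obtain ⟨Gstar, hGstar⟩ := Multiset.exists_mem_of_ne_zero
      (show GsM ≠ 0 by intro h0; rw [h0] at hGsMcard; simp at hGsMcard)
  have hGstarcard : Gstar.card = q := hcardq _ hGstar
  let e : {x // x ∈ Gstar} ≃ Fin q := Gstar.equivFin.trans (finCongr hGstarcard)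
  let w : W → ℕ := fun x => if hx : x ∈ Gstar then ds (e ⟨x, hx⟩) else h
  have hwin : ∀ (x : W) (hx : x ∈ Gstar), w x = ds (e ⟨x, hx⟩) := fun x hx => dif_pos hx
  have hwout : ∀ (x : W), x ∉ Gstar → w x = h := fun x hx => dif_neg hx
  -- every block meets `Gstar` in exactly one point
  have hxbex : ∀ b : {b : Finset W // b ∈ BsM}, ∃ x, x ∈ b.1 ∧ x ∈ Gstar ∧
      ∀ y ∈ b.1, y ∈ Gstar → y = x := by
    intro b
    have hbcard : b.1.card = u + 1 := by simpa using master.sizes b.1 b.2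
    have hinj : Set.InjOn grp ↑b.1 := by
      intro x hx y hy hxy
      by_contra hne
      exact master.within (grp x) (hgrpmem x) x (hgrpself x) y
        (by rw [hxy]; exact hgrpself y) hne b.1 b.2 ⟨Finset.mem_coe.1 hx, Finset.mem_coe.1 hy⟩
    have himage : b.1.image grp = GsM.toFinset := by
      apply Finset.eq_of_subset_of_card_le
      · intro G hG
        obtain ⟨x, hx, rfl⟩ := Finset.mem_image.1 hG
        exact Multiset.mem_toFinset.2 (hgrpmem x)
      · rw [Finset.card_image_of_injOn hinj, hbcard, Multiset.toFinset_card_of_nodup hnd,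
          hGsMcard]
    have hGmem : Gstar ∈ b.1.image grp := by
      rw [himage]; exact Multiset.mem_toFinset.2 hGstar
    obtain ⟨x, hxb, hxG⟩ := Finset.mem_image.1 hGmem
    refine ⟨x, hxb, by rw [← hxG]; exact hgrpself x, ?_⟩
    intro y hyb hyG
    refine hinj (Finset.mem_coe.2 hyb) (Finset.mem_coe.2 hxb) ?_
    rw [hxG]
    exact (hgrpuniq y Gstar hGstar hyG).symm
  choose xb hxbmem hxbstar hxbuniq using hxbex
  -- the weights on a block
  have hwmap : ∀ b : {b : Finset W // b ∈ BsM},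
      Multiset.map w b.1.val = Multiset.replicate u h + {ds (e ⟨xb b, hxbstar b⟩)} := by
    intro b
    have hbm : xb b ∈ b.1.val := hxbmem b
    have hdecomp : b.1.val = xb b ::ₘ b.1.val.erase (xb b) := (Multiset.cons_erase hbm).symm
    have hrest : Multiset.map w (b.1.val.erase (xb b)) = Multiset.replicate u h := by
      rw [Multiset.eq_replicate]
      constructor
      · rw [Multiset.card_map, Multiset.card_erase_of_mem hbm]
        have hc : Multiset.card b.1.val = u + 1 := by simpa using master.sizes b.1 b.2
        rw [hc]
        rfl
      · intro z hz
        obtain ⟨x, hx, rfl⟩ := Multiset.mem_map.1 hz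
        have hxne : x ≠ xb b := ((b.1.nodup.mem_erase_iff).1 hx).1
        have hxmem : x ∈ b.1 := Multiset.mem_of_mem_erase hx
        exact hwout x (fun hxs => hxne (hxbuniq b x hxmem hxs))
    calc Multiset.map w b.1.val
        = w (xb b) ::ₘ Multiset.map w (b.1.val.erase (xb b)) := by
          conv_lhs => rw [hdecomp, Multiset.map_cons]
      _ = ds (e ⟨xb b, hxbstar b⟩) ::ₘ Multiset.map w (b.1.val.erase (xb b)) := by
          rw [hwin (xb b) (hxbstar b)]
      _ = Multiset.replicate u h + {ds (e ⟨xb b, hxbstar b⟩)} := by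
          rw [hrest, add_comm, Multiset.singleton_add]
  -- the ingredient GDDs, one for each block
  have hsub : ∀ b : {b : Finset W // b ∈ BsM}, ∃ (Vb : Type) (_ : Fintype Vb)
      (Gsb : Multiset (Finset Vb)) (Bsb : Finset (Finset Vb)),
      IsGDD Vb Gsb Bsb {4} ∧ Gsb.map Finset.card = Multiset.map w b.1.val := by
    intro b
    obtain ⟨Vb, ftb, Gsb, Bsb, gdd, hsz⟩ := hD _ (hds (e ⟨xb b, hxbstar b⟩))
    exact ⟨Vb, ftb, Gsb, Bsb, gdd, by rw [hsz, hwmap b]⟩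
  choose Vb ftb Gsb Bsb gddb hGsb using hsub
  -- pair up the groups of each ingredient GDD with the points of the block
  have hpairs : ∀ b, ∃ l : List (Finset (Vb b) × W),
      ((l.map Prod.fst : List (Finset (Vb b))) : Multiset (Finset (Vb b))) = Gsb b ∧
      ((l.map Prod.snd : List W) : Multiset W) = b.1.val ∧
      ∀ p ∈ l, p.1.card = w p.2 :=
    fun b => GDDaux.rel_pairs (Multiset.rel_map.1 (Multiset.rel_eq.2 (hGsb b)))
  choose L hL1 hL2 hL3 using hpairs
  have hmemGsb : ∀ b (p : Finset (Vb b) × W), p ∈ L b → p.1 ∈ Gsb b := by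
    intro b p hp
    rw [← hL1 b]
    exact Multiset.mem_coe.2 (List.mem_map_of_mem (f := Prod.fst) hp)
  have hmemb : ∀ b (p : Finset (Vb b) × W), p ∈ L b → p.2 ∈ b.1 := by
    intro b p hp
    rw [Finset.mem_def, ← hL2 b]
    exact Multiset.mem_coe.2 (List.mem_map_of_mem (f := Prod.snd) hp)
  have hsndcount : ∀ b (x : W),
      Multiset.count x (Multiset.map Prod.snd (↑(L b) : Multiset (Finset (Vb b) × W))) ≤ 1 := by
    intro b x
    rw [Multiset.map_coe, hL2 b]
    exact Multiset.nodup_iff_count_le_one.1 b.1.nodup x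
  -- the unique pair whose group contains a given point
  have hprex : ∀ b (v : Vb b), ∃ p, p ∈ L b ∧ v ∈ p.1 ∧ ∀ p' ∈ L b, v ∈ p'.1 → p' = p := by
    intro b v
    obtain ⟨G, hG, hvG, hGuniq⟩ := GDDaux.uniqueGroup (gddb b) v
    have hmm : G ∈ (((L b).map Prod.fst : List (Finset (Vb b))) : Multiset (Finset (Vb b))) := by
      rw [hL1 b]; exact hG
    obtain ⟨p, hp, hpG⟩ := List.mem_map.1 (Multiset.mem_coe.1 hmm)
    refine ⟨p, hp, by rw [hpG]; exact hvG, ?_⟩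
    intro p' hp' hvp'
    have h1 : p'.1 = G := hGuniq p'.1 (hmemGsb b p' hp') hvp'
    refine GDDaux.eq_of_count_le_one Prod.fst (Multiset.mem_coe.2 hp') (Multiset.mem_coe.2 hp)
      (by rw [h1, hpG]) ?_
    show Multiset.count p'.1 (Multiset.map Prod.fst (↑(L b) : Multiset (Finset (Vb b) × W))) ≤ 1
    rw [h1, Multiset.map_coe, hL1 b]
    exact le_of_eq (GDDaux.countOne (gddb b) hG hvG)
  choose pr hpr1 hpr2 hpr3 using hprex
  -- the inflation maps
  let f : ∀ b, Vb b → (Σ x : W, Fin (w x)) := fun b v =>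
    ⟨(pr b v).2, Fin.cast (hL3 b (pr b v) (hpr1 b v)) ((pr b v).1.equivFin ⟨v, hpr2 b v⟩)⟩
  have hffst : ∀ b (v : Vb b), (f b v).1 = (pr b v).2 := fun b v => rfl
  have hfval : ∀ b (v : Vb b),
      (((f b v).2 : Fin (w (f b v).1)) : ℕ) =
        (((pr b v).1.equivFin ⟨v, hpr2 b v⟩ : Fin (pr b v).1.card) : ℕ) := fun b v => rfl
  have hfinj : ∀ b, Function.Injective (f b) := by
    intro b v v' hvv'
    have h1 : (pr b v).2 = (pr b v').2 := congrArg Sigma.fst hvv'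
    have hpp : pr b v = pr b v' :=
      GDDaux.eq_of_count_le_one Prod.snd (Multiset.mem_coe.2 (hpr1 b v))
        (Multiset.mem_coe.2 (hpr1 b v')) h1 (hsndcount b _)
    have hval : (((pr b v).1.equivFin ⟨v, hpr2 b v⟩ : Fin _) : ℕ) =
        (((pr b v').1.equivFin ⟨v', hpr2 b v'⟩ : Fin _) : ℕ) := by
      have h2 := congrArg (fun z : (Σ x : W, Fin (w x)) => ((z.2 : Fin (w z.1)) : ℕ)) hvv'
      simpa [hfval] using h2
    have h2 : (pr b v).1 = (pr b v').1 := congrArg Prod.fst hpp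
    calc v = ↑((pr b v).1.equivFin.symm ((pr b v).1.equivFin ⟨v, hpr2 b v⟩)) := by simp
      _ = ↑((pr b v').1.equivFin.symm ((pr b v').1.equivFin ⟨v', hpr2 b v'⟩)) :=
          GDDaux.symm_val h2 hval
      _ = v' := by simp
  have hfsurj : ∀ b (x : W) (hx : x ∈ b.1) (a : Fin (w x)),
      ∃ v : Vb b, f b v = ⟨x, a⟩ ∧ (pr b v).2 = x := by
    intro b x hx a
    have hmm : x ∈ (((L b).map Prod.snd : List W) : Multiset W) := by
      rw [hL2 b]; exact Finset.mem_def.1 hx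
    obtain ⟨p, hp, hp2⟩ := List.mem_map.1 (Multiset.mem_coe.1 hmm)
    have hcard : p.1.card = w x := by rw [hL3 b p hp, hp2]
    set i : Fin p.1.card := Fin.cast hcard.symm a with hi
    set v : Vb b := ↑(p.1.equivFin.symm i) with hv
    have hmem : v ∈ p.1 := (p.1.equivFin.symm i).2
    have hprv : p = pr b v := hpr3 b v p hp hmem
    have hsnd : (pr b v).2 = x := by rw [← hprv]; exact hp2
    refine ⟨v, ?_, hsnd⟩
    refine GDDaux.sigExt ?_ ?_
    · exact (hffst b v).trans hsnd
    · rw [hfval b v]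
      have hval2 : (((pr b v).1.equivFin ⟨v, hpr2 b v⟩ : Fin _) : ℕ) =
          ((p.1.equivFin ⟨v, hmem⟩ : Fin _) : ℕ) := GDDaux.eqv_val (by rw [← hprv]) _ _
      rw [hval2]
      have h3 : (⟨v, hmem⟩ : {z // z ∈ p.1}) = p.1.equivFin.symm i := Subtype.ext rfl
      rw [h3, Equiv.apply_symm_apply]
      simp [hi]
  -- points in different fibres of the same block lie in different ingredient groups
  have hdiffgrp : ∀ b (vx vy : Vb b), (pr b vx).2 ≠ (pr b vy).2 →
      ∀ G ∈ Gsb b, ¬(vx ∈ G ∧ vy ∈ G) := by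
    intro b vx vy hne G hG hmem
    obtain ⟨hvx, hvy⟩ := hmem
    obtain ⟨G0, hG0, hvx0, huniq⟩ := GDDaux.uniqueGroup (gddb b) vx
    obtain ⟨G1, hG1, hvy1, huniq'⟩ := GDDaux.uniqueGroup (gddb b) vy
    have e1 : G = G0 := huniq G hG hvx
    have e2 : (pr b vx).1 = G0 := huniq _ (hmemGsb b _ (hpr1 b vx)) (hpr2 b vx)
    have e3 : G = G1 := huniq' G hG hvy
    have e4 : (pr b vy).1 = G1 := huniq' _ (hmemGsb b _ (hpr1 b vy)) (hpr2 b vy)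
    have e5 : (pr b vx).1 = (pr b vy).1 := by rw [e2, e4, ← e1, ← e3]
    have hpp : pr b vx = pr b vy := by
      refine GDDaux.eq_of_count_le_one Prod.fst (Multiset.mem_coe.2 (hpr1 b vx))
        (Multiset.mem_coe.2 (hpr1 b vy)) e5 ?_
      show Multiset.count (pr b vx).1 (Multiset.map Prod.fst (↑(L b) : Multiset (Finset (Vb b) × W))) ≤ 1
      rw [e2, Multiset.map_coe, hL1 b]
      exact le_of_eq (GDDaux.countOne (gddb b) hG0 hvx0)
    exact hne (congrArg Prod.snd hpp)
  -- assemble the new design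
  refine ⟨(x : W) × Fin (w x), inferInstance,
    GsM.map (fun G => G.sigma (fun x => (Finset.univ : Finset (Fin (w x))))),
    BsM.attach.biUnion (fun b => (Bsb b).image (fun B => B.image (f b))), ?_, ?_⟩
  · -- the design property
    have hBsmem : ∀ B' : Finset ((x : W) × Fin (w x)),
        B' ∈ BsM.attach.biUnion (fun b => (Bsb b).image (fun B => B.image (f b))) ↔
          ∃ b, ∃ B ∈ Bsb b, B' = B.image (f b) := by
      intro B'
      rw [Finset.mem_biUnion]
      constructor
      · rintro ⟨b, -, hb2⟩
        obtain ⟨B, hB, rfl⟩ := Finset.mem_image.1 hb2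
        exact ⟨b, B, hB, rfl⟩
      · rintro ⟨b, B, hB, rfl⟩
        exact ⟨b, Finset.mem_attach _ _, Finset.mem_image.2 ⟨B, hB, rfl⟩⟩
    constructor
    · -- partition
      rintro ⟨x, a⟩
      obtain ⟨G, s, hGs, hxG, hno⟩ := master.partition x
      refine ⟨G.sigma (fun x => (Finset.univ : Finset (Fin (w x)))),
        s.map (fun G => G.sigma (fun x => (Finset.univ : Finset (Fin (w x))))), ?_, ?_, ?_⟩
      · rw [hGs, Multiset.map_cons]
      · exact Finset.mem_sigma.2 ⟨hxG, Finset.mem_univ _⟩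
      · intro G'' hG'' hmem
        obtain ⟨G', hG', rfl⟩ := Multiset.mem_map.1 hG''
        exact hno G' hG' (Finset.mem_sigma.1 hmem).1
    · -- sizes
      intro B' hB'
      obtain ⟨b, B, hB, rfl⟩ := (hBsmem B').1 hB'
      rw [Finset.card_image_of_injOn ((hfinj b).injOn)]
      simpa using (gddb b).sizes B hB
    · -- cross
      intro v v' hne hnog
      have hkey : ∀ G ∈ GsM, ¬(v.1 ∈ G ∧ v'.1 ∈ G) := by
        rintro G hG ⟨hm1, hm2⟩
        exact hnog (G.sigma (fun x => (Finset.univ : Finset (Fin (w x)))))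
          (Multiset.mem_map_of_mem _ hG)
          ⟨Finset.mem_sigma.2 ⟨hm1, Finset.mem_univ _⟩,
           Finset.mem_sigma.2 ⟨hm2, Finset.mem_univ _⟩⟩
      have hxy : v.1 ≠ v'.1 := by
        intro hE
        exact hkey (grp v.1) (hgrpmem v.1)
          ⟨hgrpself v.1, by rw [← hE]; exact hgrpself v.1⟩
      obtain ⟨b0, ⟨hb0mem, hxb0, hyb0⟩, hb0uniq⟩ := master.cross v.1 v'.1 hxy hkey
      obtain ⟨vx, hvx, hvx2⟩ := hfsurj ⟨b0, hb0mem⟩ v.1 hxb0 v.2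
      obtain ⟨vy, hvy, hvy2⟩ := hfsurj ⟨b0, hb0mem⟩ v'.1 hyb0 v'.2
      have hfv : f ⟨b0, hb0mem⟩ vx = v := hvx.trans (Sigma.eta v)
      have hfv' : f ⟨b0, hb0mem⟩ vy = v' := hvy.trans (Sigma.eta v')
      have hvxy : vx ≠ vy := fun hE => hne (by rw [← hfv, ← hfv', hE])
      have hprne : (pr ⟨b0, hb0mem⟩ vx).2 ≠ (pr ⟨b0, hb0mem⟩ vy).2 := by
        rw [hvx2, hvy2]; exact hxy
      obtain ⟨B, ⟨hBmem, hvxB, hvyB⟩, hBuniq⟩ :=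
        (gddb ⟨b0, hb0mem⟩).cross vx vy hvxy (hdiffgrp ⟨b0, hb0mem⟩ vx vy hprne)
      refine ⟨B.image (f ⟨b0, hb0mem⟩), ⟨(hBsmem _).2 ⟨⟨b0, hb0mem⟩, B, hBmem, rfl⟩,
        Finset.mem_image.2 ⟨vx, hvxB, hfv⟩, Finset.mem_image.2 ⟨vy, hvyB, hfv'⟩⟩, ?_⟩
      rintro B'' ⟨hB''mem, hvB'', hv'B''⟩
      obtain ⟨b', C, hC, rfl⟩ := (hBsmem _).1 hB''mem
      obtain ⟨pv, hpvC, hfpv⟩ := Finset.mem_image.1 hvB''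
      obtain ⟨pv', hpv'C, hfpv'⟩ := Finset.mem_image.1 hv'B''
      have hx' : v.1 ∈ b'.1 := by
        have hh : (pr b' pv).2 = v.1 := (hffst b' pv).symm.trans (congrArg Sigma.fst hfpv)
        exact hh ▸ hmemb b' _ (hpr1 b' pv)
      have hy' : v'.1 ∈ b'.1 := by
        have hh : (pr b' pv').2 = v'.1 := (hffst b' pv').symm.trans (congrArg Sigma.fst hfpv')
        exact hh ▸ hmemb b' _ (hpr1 b' pv')
      have hbb' : b' = ⟨b0, hb0mem⟩ := Subtype.ext (hb0uniq b'.1 ⟨b'.2, hx', hy'⟩)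
      subst hbb'
      have hpvx : pv = vx := hfinj _ (hfpv.trans hfv.symm)
      have hpvy : pv' = vy := hfinj _ (hfpv'.trans hfv'.symm)
      rw [hBuniq C ⟨hC, hpvx ▸ hpvC, hpvy ▸ hpv'C⟩]
    · -- within
      intro GG hGG v hv v' hv' hne B' hB' hmem
      obtain ⟨G, hG, rfl⟩ := Multiset.mem_map.1 hGG
      obtain ⟨b, B, hB, rfl⟩ := (hBsmem _).1 hB'
      obtain ⟨p, hpB, hfp⟩ := Finset.mem_image.1 hmem.1
      obtain ⟨p', hp'B, hfp'⟩ := Finset.mem_image.1 hmem.2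
      have hxG : v.1 ∈ G := (Finset.mem_sigma.1 hv).1
      have hyG : v'.1 ∈ G := (Finset.mem_sigma.1 hv').1
      have hs1 : (pr b p).2 = v.1 := (hffst b p).symm.trans (congrArg Sigma.fst hfp)
      have hs2 : (pr b p').2 = v'.1 := (hffst b p').symm.trans (congrArg Sigma.fst hfp')
      by_cases hxy : v.1 = v'.1
      · have hpp : pr b p = pr b p' :=
          GDDaux.eq_of_count_le_one Prod.snd (Multiset.mem_coe.2 (hpr1 b p))
            (Multiset.mem_coe.2 (hpr1 b p')) (by rw [hs1, hs2, hxy]) (hsndcount b _)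
        have hpe : p ≠ p' := fun hE => hne (by rw [← hfp, ← hfp', hE])
        exact (gddb b).within (pr b p).1 (hmemGsb b _ (hpr1 b p)) p (hpr2 b p) p'
          (by rw [hpp]; exact hpr2 b p') hpe B hB ⟨hpB, hp'B⟩
      · have hxb' : v.1 ∈ b.1 := hs1 ▸ hmemb b _ (hpr1 b p)
        have hyb' : v'.1 ∈ b.1 := hs2 ▸ hmemb b _ (hpr1 b p')
        exact master.within G hG v.1 hxG v'.1 hyG hxy b.1 b.2 ⟨hxb', hyb'⟩
  · -- the group sizes
    have hGssz : ∀ G : Finset W,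
        (G.sigma fun x => (Finset.univ : Finset (Fin (w x)))).card = ∑ x ∈ G, w x := by
      intro G
      rw [Finset.card_sigma]
      simp
    have hmapdecomp : Multiset.map (fun G => G.sigma (fun x => (Finset.univ : Finset (Fin (w x))))) GsM
        = Multiset.map (fun G => G.sigma (fun x => (Finset.univ : Finset (Fin (w x)))))
            (Gstar ::ₘ GsM.erase Gstar) := by
      rw [Multiset.cons_erase hGstar]
    have h1 : (Gstar.sigma fun x => (Finset.univ : Finset (Fin (w x)))).card = ∑ i, ds i := by
      rw [hGssz]
      calc ∑ x ∈ Gstar, w x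
          = ∑ x ∈ Gstar.attach, w ↑x := (Finset.sum_attach _ _).symm
        _ = ∑ x : {x // x ∈ Gstar}, ds (e x) := by
            rw [Finset.attach_eq_univ]
            exact Finset.sum_congr rfl (fun x _ => by rw [hwin ↑x x.2])
        _ = ∑ i, ds i := Equiv.sum_comp e ds
    have h2 : Multiset.map Finset.card
        (Multiset.map (fun G => G.sigma (fun x => (Finset.univ : Finset (Fin (w x)))))
          (GsM.erase Gstar)) = Multiset.replicate u (h * q) := by
      rw [Multiset.eq_replicate]
      constructor
      · rw [Multiset.card_map, Multiset.card_map, Multiset.card_erase_of_mem hGstar, hGsMcard]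
        rfl
      · intro z hz
        obtain ⟨S, hS, rfl⟩ := Multiset.mem_map.1 hz
        obtain ⟨G, hG, rfl⟩ := Multiset.mem_map.1 hS
        have hGmem : G ∈ GsM := Multiset.mem_of_mem_erase hG
        have hGne : G ≠ Gstar := ((hnd.mem_erase_iff).1 hG).1
        rw [hGssz]
        have hall : ∀ x ∈ G, w x = h := by
          intro x hx
          refine hwout x (fun hxs => hGne ?_)
          rw [hgrpuniq x G hGmem hx, hgrpuniq x Gstar hGstar hxs]
        rw [Finset.sum_congr rfl hall, Finset.sum_const, hcardq G hGmem, smul_eq_mul, mul_comm]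
    rw [hmapdecomp, Multiset.map_cons, Multiset.map_cons, h1, h2, add_comm,
      Multiset.singleton_add]
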